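/- Let ε, ε' ∈ {1,−1} and let τ_P, τ_Q : ℂ → ℂ satisfy the TQ-relations at the inhomogeneities: ε·τ_P(ξ_i)·P(ξ_i) = −a(ξ_i)·P(ξ_i−η) and ε'·τ_Q(ξ_i)·Q(ξ_i) = −a(ξ_i)·Q(ξ_i−η) for all i = 1,…,N. Assume also P(ξ_i−η)·P(ξ_i+iπ) = −P(ξ_i−η+iπ)·P(ξ_i), P(ξ_i) ≠ 0, P(ξ_i+iπ) ≠ 0, Q(ξ_i) ≠ 0, Q(ξ_i−η) ≠ 0, τ_Q(ξ_i) ≠ 0 for all i, and the genericity conditions ξ_i − ξ_j ∉ iπℤ for i ≠ j, p_i − p_j ∉ iπℤ for i ≠ j, ξ_i − p_k ∉ iπℤ, ξ_i − p_k − η ∉ iπℤ for all i, k. Then for every β ∈ ℂ: S(PQ, εε'β) = det_{1≤i,k≤N} [ τ_Q(ξ_i)/sinh(ξ_i−p_k) − β·τ_P(ξ_i)/sinh(ξ_i−p_k−η) ] / det_{1≤i,k≤N} [ τ_Q(ξ_i)/sinh(ξ_i−p_k) ]. -/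

import Mathlib

open Complex Finset

noncomputable section

def Vand {m : ℕ} (x : Fin m → ℂ) : ℂ :=
  ∏ i : Fin m, ∏ j ∈ Finset.Ioi i, Complex.sinh (x j - x i)

def trigPoly {N : ℕ} (r : Fin N → ℂ) (l : ℂ) : ℂ := ∏ j, Complex.sinh ((l - r j) / 2)
def afun {N : ℕ} (η : ℂ) (ξ : Fin N → ℂ) (l : ℂ) : ℂ := ∏ n, Complex.sinh (l - ξ n + η)
def iπ : ℂ := (Real.pi : ℂ) * Complex.I

/-- the scalar product `S(PQ,α)` of two separate states -/
def SP {N : ℕ} (η : ℂ) (ξ : Fin N → ℂ) (P Q : ℂ → ℂ) (α : ℂ) : ℂ :=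
  ∑ h : Fin N → Fin 2,
    (∏ n, (α * P (ξ n) * Q (ξ n) / (P (ξ n - η) * Q (ξ n - η))) ^ (1 - (h n : ℕ))) *
      Vand (fun n => ξ n - ((1 - (h n : ℕ) : ℕ) : ℂ) * η) / Vand ξ


lemma sinh_ne_zero_of (z : ℂ) (h : ∀ m : ℤ, z ≠ (m : ℂ) * ((Real.pi : ℂ) * Complex.I)) :
    Complex.sinh z ≠ 0 := by
  intro h0
  have hs : Complex.sin (z * Complex.I) = 0 := by
    rw [Complex.sin_mul_I, h0, zero_mul]
  rw [Complex.sin_eq_zero_iff] at hs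
  obtain ⟨k, hk⟩ := hs
  apply h (-k)
  push_cast
  linear_combination (-Complex.I) * hk + z * Complex.I_sq

lemma Ioi_castSucc' {n : ℕ} (i : Fin n) :
    Finset.Ioi (i.castSucc) =
      insert (Fin.last n) ((Finset.Ioi i).map Fin.castSuccEmb) := by
  ext j
  simp only [Finset.mem_Ioi, Finset.mem_insert, Finset.mem_map, Fin.castSuccEmb]
  constructor
  · intro hj
    rcases Fin.eq_castSucc_or_eq_last j with ⟨j', rfl⟩ | rfl
    · exact Or.inr ⟨j', by simpa [Fin.castSucc_lt_castSucc_iff] using hj, rfl⟩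
    · exact Or.inl rfl
  · rintro (rfl | ⟨j', hj', rfl⟩)
    · exact Fin.castSucc_lt_last i
    · exact Fin.castSucc_lt_castSucc_iff.mpr hj'

lemma pairProd_succ {n : ℕ} (f : Fin (n + 1) → Fin (n + 1) → ℂ) :
    (∏ i, ∏ j ∈ Finset.Ioi i, f i j)
      = (∏ i : Fin n, ∏ j ∈ Finset.Ioi i, f i.castSucc j.castSucc) *
        ∏ i : Fin n, f i.castSucc (Fin.last n) := by
  rw [Fin.prod_univ_castSucc]
  have hlast : ∏ j ∈ Finset.Ioi (Fin.last n), f (Fin.last n) j = 1 := by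
    have : Finset.Ioi (Fin.last n) = ∅ := by
      ext j; simp [Fin.le_last j, not_lt.mpr (Fin.le_last j)]
    rw [this, Finset.prod_empty]
  rw [hlast, mul_one, ← Finset.prod_mul_distrib]
  refine Finset.prod_congr rfl fun i _ => ?_
  rw [Ioi_castSucc', Finset.prod_insert, Finset.prod_map]
  · rw [mul_comm]; rfl
  · simp only [Finset.mem_map, Fin.castSuccEmb]
    rintro ⟨j', _, hj'⟩
    exact absurd hj' (Fin.castSucc_lt_last j').ne

lemma final_alg (q1 q2 q3 q4 q5 q6 q7 q8 DL ELL PP NF : ℂ) (hDL : DL ≠ 0) (hELL : ELL ≠ 0)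
    (hih : q8 * q7 = PP) (hcomb : q1 * q3 * q5 * q2 * q4 * q6 = NF) :
    q1 * ((q2 * (DL * ELL⁻¹)) * (q3 * (q4 * (DL⁻¹ * q8)))) * ((q7 * q5) * (q6 * ELL))
      = PP * NF := by
  rw [← hih, ← hcomb]
  field_simp

lemma cauchyHC : ∀ (n : ℕ) (a b c d : Fin n → ℂ),
    (∀ i, c i ≠ 0) → (∀ k, d k ≠ 0) → (∀ i k, a i * d k - c i * b k ≠ 0) →
    (Matrix.of fun i k => (a i * d k - c i * b k)⁻¹).det *
        ∏ i, ∏ k, (a i * d k - c i * b k)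
      = ∏ i, ∏ j ∈ Finset.Ioi i, ((a j * c i - a i * c j) * (b i * d j - b j * d i)) := by
  intro n
  induction n with
  | zero =>
      intro a b c d _ _ _
      simp [Matrix.det_isEmpty]
  | succ n ih =>
      intro a b c d hc hd he
      set l : Fin (n + 1) := Fin.last n with hl
      set e : Fin (n + 1) → Fin (n + 1) → ℂ := fun i k => a i * d k - c i * b k with hedef
      have hcl : ∀ i : Fin n, i.castSucc ≠ l := fun i => (Fin.castSucc_lt_last i).ne
      -- row operations
      set B : Matrix (Fin (n+1)) (Fin (n+1)) ℂ :=
        Matrix.of (fun i k => if i = l then (e l k)⁻¹ else (e i k)⁻¹ - c l / c i * (e l k)⁻¹) with hBdef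
      have hMB : (Matrix.of fun i k => (e i k)⁻¹).det = B.det := by
        apply Matrix.det_eq_of_forall_row_eq_smul_add_const
          (fun i => if i = l then 0 else c l / c i) l (by simp)
        intro i j
        by_cases hi : i = l
        · subst hi; simp [hBdef]
        · simp only [hBdef, Matrix.of_apply, if_neg hi, eq_self_iff_true, if_true]
          ring
      -- factor rows and columns
      set ρ : Fin (n+1) → ℂ := fun i => if i = l then 1 else (a l * c i - a i * c l) / c i with hρdef
      set σ : Fin (n+1) → ℂ := fun k => d k * (e l k)⁻¹ with hσdef
      set C : Matrix (Fin (n+1)) (Fin (n+1)) ℂ :=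
        Matrix.of (fun i k => if i = l then (d k)⁻¹ else (e i k)⁻¹) with hCdef
      have hBC : B = Matrix.of (fun i k => ρ i * (Matrix.of (fun i' k' => σ k' * C i' k') i k)) := by
        ext i k
        by_cases hi : i = l
        · subst hi
          simp only [hBdef, hρdef, hσdef, hCdef, Matrix.of_apply, if_pos rfl, one_mul, ↓reduceIte]
          have h2 : e l k ≠ 0 := he l k
          have h3 : d k ≠ 0 := hd k
          field_simp
        · simp only [hBdef, hρdef, hσdef, hCdef, Matrix.of_apply, if_neg hi]
          have h1 : e i k ≠ 0 := he i k
          have h2 : e l k ≠ 0 := he l k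
          have h3 : c i ≠ 0 := hc i
          field_simp
          simp only [hedef]
          ring
      have hdetB : B.det = (∏ i, ρ i) * ((∏ k, σ k) * C.det) := by
        rw [hBC, Matrix.det_mul_column ρ, Matrix.det_mul_row σ]
      -- column operations
      set C' : Matrix (Fin (n+1)) (Fin (n+1)) ℂ :=
        Matrix.of (fun i k => if k = l then C i l else C i k - d l / d k * C i l) with hC'def
      have hCC' : C.det = C'.det := by
        rw [← Matrix.det_transpose C, ← Matrix.det_transpose C']
        apply Matrix.det_eq_of_forall_row_eq_smul_add_const
          (fun k => if k = l then 0 else d l / d k) l (by simp)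
        intro k i
        by_cases hk : k = l
        · subst hk; simp [hC'def, Matrix.transpose_apply]
        · simp only [hC'def, Matrix.transpose_apply, Matrix.of_apply, if_neg hk,
            eq_self_iff_true, if_true]
          ring
      set ρ' : Fin (n+1) → ℂ := fun i => if i = l then 1 else c i * (e i l)⁻¹ with hρ'def
      set σ' : Fin (n+1) → ℂ := fun k => if k = l then 1 else (b k * d l - b l * d k) / d k with hσ'def
      set D : Matrix (Fin (n+1)) (Fin (n+1)) ℂ :=
        Matrix.of (fun i k => if i = l then (if k = l then (d l)⁻¹ else 0)
          else (if k = l then (c i)⁻¹ else (e i k)⁻¹)) with hDdef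
      have hC'D : C' = Matrix.of (fun i k => ρ' i * (Matrix.of (fun i' k' => σ' k' * D i' k') i k)) := by
        ext i k
        by_cases hi : i = l <;> by_cases hk : k = l
        · subst hi; subst hk
          simp [hC'def, hCdef, hρ'def, hσ'def, hDdef]
        · subst hi
          simp only [hC'def, hCdef, hρ'def, hσ'def, hDdef, Matrix.of_apply, if_pos rfl,
            if_neg hk, one_mul, mul_zero, ↓reduceIte]
          have h3 : d k ≠ 0 := hd k
          have h4 : d l ≠ 0 := hd l
          field_simp
          ring
        · subst hk
          simp only [hC'def, hCdef, hρ'def, hσ'def, hDdef, Matrix.of_apply, if_pos rfl,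
            if_neg hi, one_mul, mul_one, ↓reduceIte]
          have h2 : e i l ≠ 0 := he i l
          have h3 : c i ≠ 0 := hc i
          field_simp
        · simp only [hC'def, hCdef, hρ'def, hσ'def, hDdef, Matrix.of_apply, if_neg hi, if_neg hk]
          have h1 : e i k ≠ 0 := he i k
          have h2 : e i l ≠ 0 := he i l
          have h3 : d k ≠ 0 := hd k
          have h4 : d l ≠ 0 := hd l
          field_simp
          simp only [hedef]
          ring
      have hdetC' : C'.det = (∏ i, ρ' i) * ((∏ k, σ' k) * D.det) := by
        rw [hC'D, Matrix.det_mul_column ρ', Matrix.det_mul_row σ']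
      -- expand D along last row
      have hdetD : D.det = (d l)⁻¹ *
          (Matrix.of (fun i k : Fin n => (e i.castSucc k.castSucc)⁻¹)).det := by
        rw [Matrix.det_succ_row D l]
        rw [Finset.sum_eq_single l]
        · have hsub : D.submatrix l.succAbove l.succAbove
              = Matrix.of (fun i k : Fin n => (e i.castSucc k.castSucc)⁻¹) := by
            ext i k
            simp only [Matrix.submatrix_apply, hl, Fin.succAbove_last, hDdef, Matrix.of_apply,
              if_neg (hcl i), if_neg (hcl k), if_neg (Fin.castSucc_lt_last i).ne,
              if_neg (Fin.castSucc_lt_last k).ne]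
          rw [hsub]
          have hsign : ((-1 : ℂ)) ^ ((l : ℕ) + (l : ℕ)) = 1 := by
            rw [← two_mul, pow_mul]
            norm_num
          simp [hDdef, hsign]
        · intro k _ hk
          simp [hDdef, if_neg hk, hl]
          exact fun h => absurd h hk
        · simp
      -- induction hypothesis
      set M' : Matrix (Fin n) (Fin n) ℂ :=
        Matrix.of (fun i k : Fin n => (e i.castSucc k.castSucc)⁻¹) with hM'def
      have hih : M'.det * (∏ i : Fin n, ∏ k : Fin n, e i.castSucc k.castSucc)
          = ∏ i : Fin n, ∏ j ∈ Finset.Ioi i,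
              ((a j.castSucc * c i.castSucc - a i.castSucc * c j.castSucc) *
                (b i.castSucc * d j.castSucc - b j.castSucc * d i.castSucc)) :=
        ih (fun i => a i.castSucc) (fun i => b i.castSucc) (fun i => c i.castSucc)
          (fun i => d i.castSucc) (fun i => hc _) (fun k => hd _) (fun i k => he _ _)
      -- splitting the products
      have hρsplit : ∏ i : Fin (n+1), ρ i
          = ∏ i : Fin n, (a l * c i.castSucc - a i.castSucc * c l) / c i.castSucc := by
        rw [Fin.prod_univ_castSucc]
        simp [hρdef, hcl, hl]
      have hσsplit : ∏ k : Fin (n+1), σ k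
          = (∏ k : Fin n, d k.castSucc * (e l k.castSucc)⁻¹) * (d l * (e l l)⁻¹) :=
        Fin.prod_univ_castSucc _
      have hρ'split : ∏ i : Fin (n+1), ρ' i
          = ∏ i : Fin n, c i.castSucc * (e i.castSucc l)⁻¹ := by
        rw [Fin.prod_univ_castSucc]
        simp [hρ'def, hcl, hl]
      have hσ'split : ∏ k : Fin (n+1), σ' k
          = ∏ k : Fin n, (b k.castSucc * d l - b l * d k.castSucc) / d k.castSucc := by
        rw [Fin.prod_univ_castSucc]
        simp [hσ'def, hcl, hl]
      have hEsplit : (∏ i, ∏ k, e i k)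
          = ((∏ i : Fin n, ∏ k : Fin n, e i.castSucc k.castSucc) *
              (∏ i : Fin n, e i.castSucc l)) *
            ((∏ k : Fin n, e l k.castSucc) * e l l) := by
        rw [Fin.prod_univ_castSucc]
        congr 1
        · rw [← Finset.prod_mul_distrib]
          refine Finset.prod_congr rfl fun i _ => ?_
          rw [Fin.prod_univ_castSucc]
        · rw [Fin.prod_univ_castSucc]
      have hPPsplit : (∏ i, ∏ j ∈ Finset.Ioi i, ((a j * c i - a i * c j) * (b i * d j - b j * d i)))
          = (∏ i : Fin n, ∏ j ∈ Finset.Ioi i,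
              ((a j.castSucc * c i.castSucc - a i.castSucc * c j.castSucc) *
                (b i.castSucc * d j.castSucc - b j.castSucc * d i.castSucc))) *
            ∏ i : Fin n, ((a l * c i.castSucc - a i.castSucc * c l) *
              (b i.castSucc * d l - b l * d i.castSucc)) :=
        pairProd_succ _
      -- combine the per-index products
      have hcomb : (∏ i : Fin n, (a l * c i.castSucc - a i.castSucc * c l) / c i.castSucc) *
            (∏ i : Fin n, c i.castSucc * (e i.castSucc l)⁻¹) *
            (∏ i : Fin n, e i.castSucc l) *
            (∏ k : Fin n, d k.castSucc * (e l k.castSucc)⁻¹) *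
            (∏ k : Fin n, (b k.castSucc * d l - b l * d k.castSucc) / d k.castSucc) *
            (∏ k : Fin n, e l k.castSucc)
          = ∏ i : Fin n, ((a l * c i.castSucc - a i.castSucc * c l) *
              (b i.castSucc * d l - b l * d i.castSucc)) := by
        simp only [← Finset.prod_mul_distrib]
        refine Finset.prod_congr rfl fun i _ => ?_
        have h1 : c i.castSucc ≠ 0 := hc _
        have h2 : d i.castSucc ≠ 0 := hd _
        have h3 : e i.castSucc l ≠ 0 := he _ _
        have h4 : e l i.castSucc ≠ 0 := he _ _
        field_simp
      have hdetM : (Matrix.of fun i k => (e i k)⁻¹).det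
          = (∏ i, ρ i) * ((∏ k, σ k) * ((∏ i, ρ' i) * ((∏ k, σ' k) * ((d l)⁻¹ * M'.det)))) := by
        rw [hMB, hdetB, hCC', hdetC', hdetD]
      rw [hdetM, hρsplit, hσsplit, hρ'split, hσ'split, hEsplit, hPPsplit]
      exact final_alg _ _ _ _ _ _ _ _ _ _ _ _ (hd l) (he l l) hih hcomb
lemma key1 (u v : ℂ) : Complex.exp u * (Complex.exp (-v) / 2) - Complex.exp (-u) * (Complex.exp v / 2)
    = Complex.sinh (u - v) := by
  simp only [Complex.sinh, sub_eq_add_neg, neg_add, neg_neg, Complex.exp_add]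
  ring

lemma key23 (u v u' v' : ℂ) :
    (Complex.exp v * Complex.exp (-u) - Complex.exp u * Complex.exp (-v)) *
      (Complex.exp u' / 2 * (Complex.exp (-v') / 2) - Complex.exp v' / 2 * (Complex.exp (-u') / 2))
    = Complex.sinh (v - u) * Complex.sinh (u' - v') := by
  simp only [Complex.sinh, sub_eq_add_neg, neg_add, neg_neg, Complex.exp_add]
  ring

lemma cauchy_sinh (n : ℕ) (x y : Fin n → ℂ) (h : ∀ i k, Complex.sinh (x i - y k) ≠ 0) :
    (Matrix.of fun i k => (Complex.sinh (x i - y k))⁻¹).det * ∏ i, ∏ k, Complex.sinh (x i - y k)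
      = (∏ i, ∏ j ∈ Finset.Ioi i, Complex.sinh (x j - x i)) *
        ∏ i, ∏ j ∈ Finset.Ioi i, Complex.sinh (y i - y j) := by
  have h1 := cauchyHC n (fun i => Complex.exp (x i)) (fun k => Complex.exp (y k) / 2)
    (fun i => Complex.exp (-x i)) (fun k => Complex.exp (-y k) / 2)
    (fun i => Complex.exp_ne_zero _)
    (fun k => div_ne_zero (Complex.exp_ne_zero _) two_ne_zero)
    (fun i k => by rw [key1]; exact h i k)
  simp only [key1, key23] at h1
  rw [h1]
  simp only [Finset.prod_mul_distrib]

lemma sinh_half (z : ℂ) :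
    Complex.sinh z
      = (-2) * Complex.I * (Complex.sinh (z / 2) *
          Complex.sinh (z / 2 + (Real.pi : ℂ) * Complex.I / 2)) := by
  have hc : Complex.cosh ((Real.pi : ℂ) * Complex.I / 2) = 0 := by
    rw [show (Real.pi : ℂ) * Complex.I / 2 = ((Real.pi : ℂ) / 2) * Complex.I by ring,
      Complex.cosh_mul_I, Complex.cos_pi_div_two]
  have hs : Complex.sinh ((Real.pi : ℂ) * Complex.I / 2) = Complex.I := by
    rw [show (Real.pi : ℂ) * Complex.I / 2 = ((Real.pi : ℂ) / 2) * Complex.I by ring,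
      Complex.sinh_mul_I, Complex.sin_pi_div_two, one_mul]
  have h1 : Complex.sinh (z / 2 + (Real.pi : ℂ) * Complex.I / 2)
      = Complex.cosh (z / 2) * Complex.I := by
    rw [Complex.sinh_add, hc, hs]; ring
  have h2 : Complex.sinh z = 2 * Complex.sinh (z / 2) * Complex.cosh (z / 2) := by
    rw [show z = 2 * (z / 2) by ring, Complex.sinh_two_mul]
    ring_nf
  rw [h1, h2]
  linear_combination (2 * Complex.sinh (z / 2) * Complex.cosh (z / 2)) * Complex.I_sq

lemma prod_sinh_trig (N : ℕ) (r : Fin N → ℂ) (lam : ℂ) :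
    ∏ k, Complex.sinh (lam - r k)
      = ((-2) * Complex.I) ^ N *
        ((∏ k, Complex.sinh ((lam - r k) / 2)) *
          ∏ k, Complex.sinh ((lam + (Real.pi : ℂ) * Complex.I - r k) / 2)) := by
  have key : ∀ k, Complex.sinh (lam - r k)
      = ((-2) * Complex.I) * (Complex.sinh ((lam - r k) / 2) *
          Complex.sinh ((lam + (Real.pi : ℂ) * Complex.I - r k) / 2)) := by
    intro k
    rw [sinh_half (lam - r k),
      show (lam - r k) / 2 + (Real.pi : ℂ) * Complex.I / 2
        = (lam + (Real.pi : ℂ) * Complex.I - r k) / 2 by ring]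
  rw [Finset.prod_congr rfl fun k _ => key k, Finset.prod_mul_distrib,
    Finset.prod_mul_distrib, Finset.prod_const, Finset.prod_const, Finset.card_univ,
    Fintype.card_fin, mul_pow, mul_assoc, Finset.prod_mul_distrib]
  ring

lemma fin2 (j : Fin 2) : j = 0 ∨ j = 1 := by omega

lemma scalar_key (ε ε' β τP τQ a T0 Tπ T1 T1π Qi Qi1 c : ℂ)
    (hε2 : ε * ε = 1) (hε'2 : ε' * ε' = 1)
    (h1 : ε * τP * T0 = -(a * T1)) (h2 : ε' * τQ * Qi = -(a * Qi1))
    (h3 : T1 * Tπ = -(T1π * T0))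
    (hT0 : T0 ≠ 0) (hTπ : Tπ ≠ 0) (hT1 : T1 ≠ 0) (hT1π : T1π ≠ 0)
    (hQi1 : Qi1 ≠ 0) (hc : c ≠ 0) :
    -(β * τP) * (c * (T1 * T1π))⁻¹
      = ε * ε' * β * T0 * Qi / (T1 * Qi1) * (τQ * (c * (T0 * Tπ))⁻¹) := by
  have h4 : c * (T1 * T1π) ≠ 0 := mul_ne_zero hc (mul_ne_zero hT1 hT1π)
  have h5 : c * (T0 * Tπ) ≠ 0 := mul_ne_zero hc (mul_ne_zero hT0 hTπ)
  have h6 : T1 * Qi1 ≠ 0 := mul_ne_zero hT1 hQi1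
  rw [← div_eq_mul_inv, ← div_eq_mul_inv, div_mul_div_comm,
    div_eq_div_iff h4 (mul_ne_zero h6 h5)]
  linear_combination (-(ε * β * (T1 * Qi1 * c * Tπ))) * h1 +
    (-(ε * ε' * ε' * β * (T0 * c * T1 * T1π))) * h2 +
    (ε * β * a * c * Qi1 * T1) * h3 +
    (β * (T1 * Qi1 * c * Tπ) * τP * T0) * hε2 +
    (ε * β * a * (T0 * c * T1 * T1π) * Qi1 + ε * ε' * β * (T0 * c * T1 * T1π) * (τQ * Qi)) * hε'2

lemma term_eq (PF PT V0 Vh Wp S0 PC Sh PL : ℂ) (hV0 : V0 ≠ 0) (hS0 : S0 ≠ 0) (hSh : Sh ≠ 0)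
    (hL : PC * Sh⁻¹ = PL) (hR : PF * (PT * S0⁻¹) = PL) :
    PF * Vh / V0 * (PT * (V0 * Wp / S0)) = PC * (Vh * Wp / Sh) := by
  have hL' : PC = PL * Sh := by rw [← hL]; field_simp
  have hR' : PF * PT = PL * S0 := by rw [← hR]; field_simp
  have hu := mul_inv_cancel₀ hV0
  have hs := mul_inv_cancel₀ hS0
  have ht := mul_inv_cancel₀ hSh
  rw [hL']
  simp only [div_eq_mul_inv]
  linear_combination (Vh * Wp * (V0 * V0⁻¹) * S0⁻¹) * hR' + Vh * Wp * PL * (V0 * V0⁻¹) * hs +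
    Vh * Wp * PL * hu - Vh * Wp * PL * ht

set_option maxHeartbeats 1000000 in
/-- Izergin-type representation of the overlap of two twisted
eigenstates, directly in terms of the transfer matrix eigenvalues. -/
theorem overlap_izergin_tau (N : ℕ) (hN : 1 ≤ N) (η : ℂ) (ξ p q : Fin N → ℂ)
    (P Q a : ℂ → ℂ)
    (hP : P = trigPoly p) (hQ : Q = trigPoly q) (ha : a = afun η ξ)
    (ε ε' : ℂ) (hε : ε = 1 ∨ ε = -1) (hε' : ε' = 1 ∨ ε' = -1)
    (τP τQ : ℂ → ℂ)
    (hTQP : ∀ i, ε * τP (ξ i) * P (ξ i) = -(a (ξ i) * P (ξ i - η)))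
    (hTQQ : ∀ i, ε' * τQ (ξ i) * Q (ξ i) = -(a (ξ i) * Q (ξ i - η)))
    (hPper : ∀ i, P (ξ i - η) * P (ξ i + iπ) = -(P (ξ i - η + iπ) * P (ξ i)))
    (hPξ : ∀ i, P (ξ i) ≠ 0)
    (hPξπ : ∀ i, P (ξ i + iπ) ≠ 0)
    (hQξ : ∀ i, Q (ξ i) ≠ 0)
    (hQξη : ∀ i, Q (ξ i - η) ≠ 0)
    (hτQ : ∀ i, τQ (ξ i) ≠ 0)
    (hξξ : ∀ i j, i ≠ j → ∀ m : ℤ, ξ i - ξ j ≠ (m : ℂ) * iπ)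
    (hpp : ∀ i j, i ≠ j → ∀ m : ℤ, p i - p j ≠ (m : ℂ) * iπ)
    (hξp : ∀ i k, ∀ m : ℤ, ξ i - p k ≠ (m : ℂ) * iπ)
    (hξpη : ∀ i k, ∀ m : ℤ, ξ i - p k - η ≠ (m : ℂ) * iπ)
    (β : ℂ) :
    SP η ξ P Q (ε * ε' * β) =
      Matrix.det (Matrix.of (fun i k : Fin N =>
          τQ (ξ i) / Complex.sinh (ξ i - p k) -
            β * τP (ξ i) / Complex.sinh (ξ i - p k - η))) /
        Matrix.det (Matrix.of (fun i k : Fin N =>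
          τQ (ξ i) / Complex.sinh (ξ i - p k))) := by
  subst hP; subst hQ; subst ha
  have hε0 : ε ≠ 0 := by rcases hε with rfl | rfl <;> norm_num
  have hε'0 : ε' ≠ 0 := by rcases hε' with rfl | rfl <;> norm_num
  have hε2 : ε * ε = 1 := by rcases hε with rfl | rfl <;> norm_num
  have hε'2 : ε' * ε' = 1 := by rcases hε' with rfl | rfl <;> norm_num
  have hπne : ∀ z : ℂ, (∀ m : ℤ, z ≠ (m : ℂ) * iπ) → Complex.sinh z ≠ 0 := by
    intro z hz
    exact sinh_ne_zero_of z (by simpa [iπ] using hz)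
  have hs0 : ∀ i k, Complex.sinh (ξ i - p k) ≠ 0 := fun i k => hπne _ (hξp i k)
  have hsη : ∀ i k, Complex.sinh (ξ i - η - p k) ≠ 0 := by
    intro i k
    apply hπne
    intro m hEq
    exact hξpη i k m (by linear_combination hEq)
  have hVξ : Vand ξ ≠ 0 := by
    unfold Vand
    rw [Finset.prod_ne_zero_iff]
    intro i _
    rw [Finset.prod_ne_zero_iff]
    intro j hj
    exact hπne _ (hξξ j i (Finset.mem_Ioi.mp hj).ne')
  set Wp : ℂ := ∏ i, ∏ j ∈ Finset.Ioi i, Complex.sinh (p i - p j) with hWpdef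
  have hWp : Wp ≠ 0 := by
    rw [hWpdef, Finset.prod_ne_zero_iff]
    intro i _
    rw [Finset.prod_ne_zero_iff]
    intro j hj
    exact hπne _ (hpp i j (Finset.mem_Ioi.mp hj).ne)
  set S0 : ℂ := ∏ i, ∏ k, Complex.sinh (ξ i - p k) with hS0def
  have hS0 : S0 ≠ 0 := by
    rw [hS0def, Finset.prod_ne_zero_iff]
    intro i _
    rw [Finset.prod_ne_zero_iff]
    intro k _
    exact hs0 i k
  set PT : ℂ := ∏ i, τQ (ξ i) with hPTdef
  have hPT : PT ≠ 0 := by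
    rw [hPTdef, Finset.prod_ne_zero_iff]
    intro i _
    exact hτQ i
  set c : ℂ := ((-2) * Complex.I) ^ N with hcdef
  have hcne : c ≠ 0 := pow_ne_zero _ (mul_ne_zero (by norm_num) Complex.I_ne_zero)
  have hPηne : ∀ i, trigPoly p (ξ i - η) ≠ 0 := by
    intro i
    unfold trigPoly
    rw [Finset.prod_ne_zero_iff]
    intro j _
    apply sinh_ne_zero_of
    intro m hEq
    apply hξpη i j (2 * m)
    simp only [iπ]
    push_cast
    linear_combination 2 * hEq
  have hPηπne : ∀ i, trigPoly p (ξ i - η + iπ) ≠ 0 := by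
    intro i
    unfold trigPoly
    rw [Finset.prod_ne_zero_iff]
    intro j _
    apply sinh_ne_zero_of
    intro m hEq
    apply hξpη i j (2 * m - 1)
    simp only [iπ] at hEq ⊢
    push_cast
    linear_combination 2 * hEq
  have hprod0 : ∀ i, (∏ k, Complex.sinh (ξ i - p k))
      = c * (trigPoly p (ξ i) * trigPoly p (ξ i + iπ)) := by
    intro i
    rw [prod_sinh_trig N p (ξ i), hcdef]
    simp only [trigPoly, iπ]
  have hprodη : ∀ i, (∏ k, Complex.sinh (ξ i - η - p k))
      = c * (trigPoly p (ξ i - η) * trigPoly p (ξ i - η + iπ)) := by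
    intro i
    rw [prod_sinh_trig N p (ξ i - η), hcdef]
    simp only [trigPoly, iπ]
  -- the denominator determinant
  have hcd : (Matrix.of fun i k => (Complex.sinh (ξ i - p k))⁻¹).det * S0 = Vand ξ * Wp := by
    have h := cauchy_sinh N ξ p hs0
    rw [hS0def, hWpdef]
    unfold Vand
    exact h
  have hden : (Matrix.of (fun i k : Fin N =>
        τQ (ξ i) / Complex.sinh (ξ i - p k))).det = PT * (Vand ξ * Wp / S0) := by
    have h1 : (Matrix.of (fun i k : Fin N => τQ (ξ i) / Complex.sinh (ξ i - p k)))
        = Matrix.of (fun i k => τQ (ξ i) * (Complex.sinh (ξ i - p k))⁻¹) := by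
      ext i k
      simp [div_eq_mul_inv]
    rw [h1, show (Matrix.of (fun i k : Fin N => τQ (ξ i) * (Complex.sinh (ξ i - p k))⁻¹))
        = Matrix.of (fun i k => (fun i' => τQ (ξ i')) i *
            (Matrix.of fun i' k' => (Complex.sinh (ξ i' - p k'))⁻¹) i k) from rfl,
      Matrix.det_mul_column]
    have h2 : (Matrix.of fun i k => (Complex.sinh (ξ i - p k))⁻¹).det
        = Vand ξ * Wp / S0 := by
      rw [eq_div_iff hS0]
      exact hcd
    rw [h2, ← hPTdef]
  have hdenne : (Matrix.of (fun i k : Fin N =>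
      τQ (ξ i) / Complex.sinh (ξ i - p k))).det ≠ 0 := by
    rw [hden]
    exact mul_ne_zero hPT (div_ne_zero (mul_ne_zero hVξ hWp) hS0)
  -- the numerator determinant
  set cf : Fin N → Fin 2 → ℂ := fun i j => if j = 0 then -(β * τP (ξ i)) else τQ (ξ i) with hcf
  set g : Fin N → Fin 2 → (Fin N → ℂ) :=
    fun i j => fun k => cf i j *
      (Complex.sinh (ξ i - ((1 - (j : ℕ) : ℕ) : ℂ) * η - p k))⁻¹ with hg
  have hXne : ∀ (i : Fin N) (j : Fin 2) (k : Fin N),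
      Complex.sinh (ξ i - ((1 - (j : ℕ) : ℕ) : ℂ) * η - p k) ≠ 0 := by
    intro i j k
    rcases fin2 j with rfl | rfl
    · simpa using hsη i k
    · simpa using hs0 i k
  have hShne : ∀ h : Fin N → Fin 2,
      (∏ i, ∏ k, Complex.sinh (ξ i - ((1 - (h i : ℕ) : ℕ) : ℂ) * η - p k)) ≠ 0 := by
    intro h
    rw [Finset.prod_ne_zero_iff]
    intro i _
    rw [Finset.prod_ne_zero_iff]
    intro k _
    exact hXne i (h i) k
  have hterm : ∀ h : Fin N → Fin 2, Matrix.det (fun i => g i (h i))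
      = (∏ i, cf i (h i)) *
          (Vand (fun n => ξ n - ((1 - (h n : ℕ) : ℕ) : ℂ) * η) * Wp /
            ∏ i, ∏ k, Complex.sinh (ξ i - ((1 - (h i : ℕ) : ℕ) : ℂ) * η - p k)) := by
    intro h
    have e1 : (fun i => g i (h i))
        = Matrix.of (fun i k => (fun i' => cf i' (h i')) i *
            (Matrix.of fun i' k' =>
              (Complex.sinh (ξ i' - ((1 - (h i' : ℕ) : ℕ) : ℂ) * η - p k'))⁻¹) i k) := rfl
    rw [e1, Matrix.det_mul_column]
    congr 1
    have hc2 : (Matrix.of fun i' k' =>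
          (Complex.sinh (ξ i' - ((1 - (h i' : ℕ) : ℕ) : ℂ) * η - p k'))⁻¹).det *
        (∏ i, ∏ k, Complex.sinh (ξ i - ((1 - (h i : ℕ) : ℕ) : ℂ) * η - p k))
        = Vand (fun n => ξ n - ((1 - (h n : ℕ) : ℕ) : ℂ) * η) * Wp := by
      have h2 := cauchy_sinh N (fun n => ξ n - ((1 - (h n : ℕ) : ℕ) : ℂ) * η) p
        (fun i k => hXne i (h i) k)
      rw [hWpdef]
      unfold Vand
      exact h2
    rw [eq_div_iff (hShne h)]
    exact hc2
  have hnum : (Matrix.of (fun i k : Fin N =>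
        τQ (ξ i) / Complex.sinh (ξ i - p k) -
          β * τP (ξ i) / Complex.sinh (ξ i - p k - η))).det
      = ∑ h : Fin N → Fin 2, (∏ i, cf i (h i)) *
          (Vand (fun n => ξ n - ((1 - (h n : ℕ) : ℕ) : ℂ) * η) * Wp /
            ∏ i, ∏ k, Complex.sinh (ξ i - ((1 - (h i : ℕ) : ℕ) : ℂ) * η - p k)) := by
    have hrows : (Matrix.of (fun i k : Fin N =>
        τQ (ξ i) / Complex.sinh (ξ i - p k) -
          β * τP (ξ i) / Complex.sinh (ξ i - p k - η)))
        = fun i => ∑ j : Fin 2, g i j := by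
      funext i k
      simp only [Matrix.of_apply, Finset.sum_apply, Fin.sum_univ_two, hg, hcf]
      norm_num
      rw [show ξ i - η - p k = ξ i - p k - η from by ring,
        div_eq_mul_inv, div_eq_mul_inv]
      ring
    rw [hrows]
    have hms := (Matrix.detRowAlternating (R := ℂ) (n := Fin N)).toMultilinearMap.map_sum
      (fun i (j : Fin 2) => g i j)
    calc (Matrix.det (fun i => ∑ j : Fin 2, g i j))
        = ∑ r : Fin N → Fin 2, Matrix.det (fun i => g i (r i)) := hms
      _ = _ := Finset.sum_congr rfl fun h _ => hterm h
  -- the pointwise identity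
  have hpoint : ∀ (i : Fin N) (j : Fin 2),
      cf i j * (∏ k, Complex.sinh (ξ i - ((1 - (j : ℕ) : ℕ) : ℂ) * η - p k))⁻¹
      = (ε * ε' * β * trigPoly p (ξ i) * trigPoly q (ξ i) /
          (trigPoly p (ξ i - η) * trigPoly q (ξ i - η))) ^ (1 - (j : ℕ)) *
        (τQ (ξ i) * (∏ k, Complex.sinh (ξ i - p k))⁻¹) := by
    intro i j
    rcases fin2 j with rfl | rfl
    · simp only [hcf]
      norm_num
      rw [show (∏ k, Complex.sinh (ξ i - η - p k)) = c * (trigPoly p (ξ i - η) *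
          trigPoly p (ξ i - η + iπ)) from hprodη i,
        show (∏ k, Complex.sinh (ξ i - p k)) = c * (trigPoly p (ξ i) *
          trigPoly p (ξ i + iπ)) from hprod0 i]
      rw [neg_mul_eq_neg_mul]
      exact scalar_key ε ε' β (τP (ξ i)) (τQ (ξ i)) (afun η ξ (ξ i)) (trigPoly p (ξ i))
        (trigPoly p (ξ i + iπ)) (trigPoly p (ξ i - η)) (trigPoly p (ξ i - η + iπ))
        (trigPoly q (ξ i)) (trigPoly q (ξ i - η)) c hε2 hε'2 (hTQP i) (hTQQ i) (hPper i)
        (hPξ i) (hPξπ i) (hPηne i) (hPηπne i) (hQξη i) hcne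
    · simp only [hcf]
      norm_num
  -- put everything together
  rw [eq_div_iff hdenne, hnum, hden]
  simp only [SP]
  rw [Finset.sum_mul]
  refine Finset.sum_congr rfl fun h _ => ?_
  refine (term_eq _ _ _ _ _ _ _ _
    (∏ i, ((ε * ε' * β * trigPoly p (ξ i) * trigPoly q (ξ i) /
        (trigPoly p (ξ i - η) * trigPoly q (ξ i - η))) ^ (1 - (h i : ℕ)) *
      (τQ (ξ i) * (∏ k, Complex.sinh (ξ i - p k))⁻¹)))
    hVξ hS0 (hShne h) ?_ ?_)
  · rw [← Finset.prod_inv_distrib, ← Finset.prod_mul_distrib]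
    exact Finset.prod_congr rfl fun i _ => hpoint i (h i)
  · rw [hS0def, ← Finset.prod_inv_distrib, hPTdef, ← Finset.prod_mul_distrib,
      ← Finset.prod_mul_distrib]


end
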